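/- arXiv:2012.04436 — 2 statements merged into one kernel-verified Lean document; each statement's English description precedes it below -/
import Mathlib

section
/- Let F be L-smooth and μ-strongly convex with minimizer ξ*, λ ∈ (0, 1/L], and ν ∈ ℕ. Then ν steps of gradient descent x_{k+1} = x_k - λ∇F(x_k) satisfy F(x_ν) - F(ξ*) ≤ (1 - μλ)^ν · (F(x_0) - F(ξ*)). -/
/-- ν steps of gradient descent with step size 0 < λ ≤ 1/L on an L-smooth, μ-strongly convex
function contract the optimality gap by (1 - μλ)^ν. -/
theorem gd_multi_step_contraction {d : ℕ} (F : EuclideanSpace ℝ (Fin d) → ℝ)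
    (g : EuclideanSpace ℝ (Fin d) → EuclideanSpace ℝ (Fin d)) (μ L lam : ℝ)
    (hμ : 0 < μ) (hμL : μ ≤ L)
    (hsm : ∀ x y, F y ≤ F x + (inner ℝ (g x) (y - x) : ℝ) + L / 2 * ‖y - x‖ ^ 2)
    (hsc : ∀ x y, F x + (inner ℝ (g x) (y - x) : ℝ) + μ / 2 * ‖y - x‖ ^ 2 ≤ F y)
    (ξ : EuclideanSpace ℝ (Fin d)) (hξmin : ∀ y, F ξ ≤ F y) (hξgrad : g ξ = 0)
    (hlam0 : 0 < lam) (hlam : lam ≤ 1 / L)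
    (x : ℕ → EuclideanSpace ℝ (Fin d)) (hx : ∀ k, x (k + 1) = x k - lam • g (x k))
    (ν : ℕ) :
    F (x ν) - F ξ ≤ (1 - μ * lam) ^ ν * (F (x 0) - F ξ) := by
  have hL : 0 < L := lt_of_lt_of_le hμ hμL
  have hLlam : L * lam ≤ 1 := by
    rw [le_div_iff₀ hL] at hlam; linarith
  have hcontra : (0:ℝ) ≤ 1 - μ * lam := by nlinarith
  have step : ∀ k, F (x (k+1)) - F ξ ≤ (1 - μ * lam) * (F (x k) - F ξ) := by
    intro k
    set z := x k with hz
    -- PL inequality: 2μ(F z - F ξ) ≤ ‖g z‖²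
    have h1 := hsc z ξ
    have hsq : (0:ℝ) ≤ ‖μ • (ξ - z) + g z‖^2 := sq_nonneg _
    rw [norm_add_sq_real, real_inner_smul_left, norm_smul,
      real_inner_comm (g z) (ξ - z), Real.norm_eq_abs, abs_of_pos hμ] at hsq
    have hPL : 2 * μ * (F z - F ξ) ≤ ‖g z‖^2 := by
      nlinarith [mul_le_mul_of_nonneg_left h1 (le_of_lt hμ), hsq, sq_nonneg ‖ξ - z‖]
    -- descent step
    have h2 := hsm z (z - lam • g z)
    rw [sub_sub_cancel_left, inner_neg_right, real_inner_smul_right,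
      real_inner_self_eq_norm_sq, norm_neg, norm_smul, Real.norm_eq_abs,
      abs_of_pos hlam0] at h2
    rw [hx k, ← hz]
    have hgap : 0 ≤ F z - F ξ := by linarith [hξmin z]
    nlinarith [mul_le_mul_of_nonneg_left hPL (le_of_lt hlam0), sq_nonneg ‖g z‖,
      mul_nonneg (mul_nonneg (by linarith : (0:ℝ) ≤ 1 - L * lam) (le_of_lt hlam0))
        (sq_nonneg ‖g z‖)]
  induction ν with
  | zero => simp
  | succ n ih =>
    calc F (x (n+1)) - F ξ ≤ (1 - μ * lam) * (F (x n) - F ξ) := step n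
      _ ≤ (1 - μ * lam) * ((1 - μ * lam) ^ n * (F (x 0) - F ξ)) :=
          mul_le_mul_of_nonneg_left ih hcontra
      _ = (1 - μ * lam) ^ (n+1) * (F (x 0) - F ξ) := by ring
end

section
/- For the one-dimensional Gaussian mechanism M(x) = f(x) + N(0, σ²) with |f(x) − f(x')| ≤ Δ for all x, x', and any ε ∈ (0,1): if σ ≥ (Δ/ε)·√(2·ln(1.25/δ)) with δ ∈ (0,1), then for every measurable set E, Pr[M(x) ∈ E] ≤ e^ε · Pr[M(x') ∈ E] + δ. -/
open MeasureTheory ProbabilityTheory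

section GaussDPHelpers
open Real


lemma gauss_reflect (m : ℝ) {v : NNReal} (hv : v ≠ 0) (k : ℝ) :
    gaussianReal m v (Set.Iio (m - k)) = gaussianReal m v (Set.Ioi (m + k)) := by
  have h1 : Measure.map (fun x : ℝ => (-1) * x + 2*m) (gaussianReal m v) = gaussianReal m v := by
    have h0 : (fun x : ℝ => (-1) * x + 2*m) = (fun y : ℝ => y + 2*m) ∘ (fun x : ℝ => (-1) * x) := rfl
    have h2 : (NNReal.mk ((-1:ℝ)^2) (sq_nonneg _)) = 1 := by ext; norm_num
    rw [h0, ← Measure.map_map (by fun_prop) (by fun_prop),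
      gaussianReal_map_const_mul (-1 : ℝ), h2, one_mul, gaussianReal_map_add_const]
    ring_nf
  have h3 : (fun x : ℝ => (-1) * x + 2*m) ⁻¹' (Set.Iio (m - k)) = Set.Ioi (m + k) := by
    ext t; simp only [Set.mem_preimage, Set.mem_Iio, Set.mem_Ioi]
    constructor <;> intro h <;> linarith
  conv_lhs => rw [← h1]
  rw [Measure.map_apply (by fun_prop) measurableSet_Iio, h3]

lemma gauss_half (m : ℝ) {v : NNReal} (hv : v ≠ 0) :
    gaussianReal m v (Set.Ioi m) ≤ 1/2 := by
  have hrefl := gauss_reflect m hv 0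
  simp only [sub_zero, add_zero] at hrefl
  have hdisj : Disjoint (Set.Iio m) (Set.Ioi m) := by
    rw [Set.disjoint_left]; intro a h1 h2; exact absurd h2 (by simpa using le_of_lt h1)
  have hU : gaussianReal m v (Set.Iio m ∪ Set.Ioi m) =
      gaussianReal m v (Set.Iio m) + gaussianReal m v (Set.Ioi m) :=
    measure_union hdisj measurableSet_Ioi
  have hle : gaussianReal m v (Set.Iio m ∪ Set.Ioi m) ≤ 1 := prob_le_one
  rw [hU, hrefl] at hle
  rw [ENNReal.le_div_iff_mul_le (Or.inl (by norm_num)) (Or.inl (by norm_num)), mul_comm, two_mul]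
  exact hle



lemma gauss_tail {σ : ℝ} (hσ : 0 < σ) (m k : ℝ) (hk : 0 ≤ k) :
    gaussianReal m (σ^2).toNNReal (Set.Ioi (m + k)) ≤
      ENNReal.ofReal (rexp (-k^2 / (2*σ^2)) / 2) := by
  set v : NNReal := (σ^2).toNNReal with hvdef
  have hv0 : v ≠ 0 := by
    simp [hvdef, Real.toNNReal_eq_zero]
    positivity
  have hvr : (v : ℝ) = σ^2 := Real.coe_toNNReal _ (sq_nonneg σ)
  have hpt : ∀ t ∈ Set.Ioi (m + k),
      gaussianPDF m v t ≤ ENNReal.ofReal (rexp (-k^2 / (2*σ^2))) * gaussianPDF (m+k) v t := by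
    intro t ht
    rw [Set.mem_Ioi] at ht
    rw [gaussianPDF, gaussianPDF, ← ENNReal.ofReal_mul (exp_nonneg _)]
    apply ENNReal.ofReal_le_ofReal
    rw [gaussianPDFReal, gaussianPDFReal, mul_left_comm]
    refine mul_le_mul_of_nonneg_left ?_ (by positivity)
    rw [← Real.exp_add]
    apply Real.exp_le_exp.mpr
    rw [hvr]
    have h2 : (0:ℝ) < 2*σ^2 := by positivity
    rw [← add_div, div_le_div_iff₀ h2 h2]
    nlinarith [mul_nonneg (mul_nonneg hk (show (0:ℝ) ≤ t-m-k by linarith)) (le_of_lt h2)]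
  calc gaussianReal m v (Set.Ioi (m + k))
      = ∫⁻ t in Set.Ioi (m + k), gaussianPDF m v t := gaussianReal_apply m hv0 _
    _ ≤ ∫⁻ t in Set.Ioi (m + k),
          ENNReal.ofReal (rexp (-k^2 / (2*σ^2))) * gaussianPDF (m+k) v t :=
        setLIntegral_mono (by exact (measurable_gaussianPDF _ _).const_mul _) hpt
    _ = ENNReal.ofReal (rexp (-k^2 / (2*σ^2))) * ∫⁻ t in Set.Ioi (m + k), gaussianPDF (m+k) v t := by
        rw [lintegral_const_mul _ (measurable_gaussianPDF _ _)]
    _ = ENNReal.ofReal (rexp (-k^2 / (2*σ^2))) * gaussianReal (m+k) v (Set.Ioi (m + k)) := by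
        rw [gaussianReal_apply _ hv0]
    _ ≤ ENNReal.ofReal (rexp (-k^2 / (2*σ^2))) * (1/2) := by
        exact mul_le_mul_right (gauss_half (m+k) hv0) _
    _ = ENNReal.ofReal (rexp (-k^2 / (2*σ^2)) / 2) := by
        rw [ENNReal.ofReal_div_of_pos (by norm_num), mul_one_div]
        norm_num


lemma gauss_low {σ : ℝ} (hσ : 0 < σ) (m k : ℝ) (hk0 : k ≤ 0) (hk1 : -(σ/5) ≤ k) :
    gaussianReal m (σ^2).toNNReal (Set.Ioi (m + k)) ≤ ENNReal.ofReal (15/16 : ℝ) := by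
  set v : NNReal := (σ^2).toNNReal with hvdef
  have hv0 : v ≠ 0 := by
    simp [hvdef, Real.toNNReal_eq_zero]; positivity
  have hvr : (v : ℝ) = σ^2 := Real.coe_toNNReal _ (sq_nonneg σ)
  set C : ℝ := (√(2*π*(v:ℝ)))⁻¹ * rexp (-(k-σ)^2/(2*(v:ℝ))) with hC
  -- the constant is at least 1/16 after multiplying by σ
  have hsqrt : √(2*π*(v:ℝ)) = √(2*π) * σ := by
    rw [hvr, Real.sqrt_mul (by positivity), Real.sqrt_sq hσ.le]
  have hs251 : √(2*π) ≤ 2.51 := by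
    have : (2:ℝ)*π ≤ 2.51^2 := by nlinarith [Real.pi_lt_d2]
    calc √(2*π) ≤ √(2.51^2) := Real.sqrt_le_sqrt this
      _ = 2.51 := Real.sqrt_sq (by norm_num)
  have hexp : rexp (-(k-σ)^2/(2*(v:ℝ))) ≥ rexp (-1) := by
    apply Real.exp_le_exp.mpr
    rw [hvr, neg_div]
    rw [neg_le_neg_iff, div_le_one (by positivity)]
    nlinarith
  have hexp1 : rexp (-1) ≥ (2.7182818286 : ℝ)⁻¹ := by
    rw [Real.exp_neg]
    exact inv_anti₀ (Real.exp_pos 1) (le_of_lt Real.exp_one_lt_d9)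
  have hC16 : (1/16 : ℝ) ≤ σ * C := by
    rw [hC, hsqrt]
    have h1 : σ * ((√(2*π)*σ)⁻¹ * rexp (-(k-σ)^2/(2*(v:ℝ))))
        = (√(2*π))⁻¹ * rexp (-(k-σ)^2/(2*(v:ℝ))) := by
      field_simp
    rw [h1]
    have hsp : (0:ℝ) < √(2*π) := Real.sqrt_pos.mpr (by nlinarith [Real.pi_pos])
    have h2 : (√(2*π))⁻¹ ≥ (2.51:ℝ)⁻¹ := inv_anti₀ hsp hs251
    nlinarith [Real.exp_pos (-(k-σ)^2/(2*(v:ℝ)))]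
  -- lower bound on the Iic probability
  have hIoc : gaussianReal m v (Set.Ioc (m+k-σ) (m+k)) ≥ ENNReal.ofReal (σ * C) := by
    rw [gaussianReal_apply_eq_integral _ hv0]
    apply ENNReal.ofReal_le_ofReal
    have hpt : ∀ t ∈ Set.Ioc (m+k-σ) (m+k), C ≤ gaussianPDFReal m v t := by
      intro t ht
      rw [Set.mem_Ioc] at ht
      rw [gaussianPDFReal, hC]
      apply mul_le_mul_of_nonneg_left _ (by positivity)
      apply Real.exp_le_exp.mpr
      rw [hvr, neg_div, neg_div, neg_le_neg_iff, div_le_div_iff₀ (by positivity) (by positivity)]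
      have hx : (t-m)^2 ≤ (k-σ)^2 := by
        nlinarith [mul_nonneg (show (0:ℝ) ≤ σ-k+(t-m) by nlinarith [ht.1]) (show (0:ℝ) ≤ σ-k-(t-m) by nlinarith [ht.2])]
      nlinarith [mul_le_mul_of_nonneg_right hx (show (0:ℝ) ≤ 2*σ^2 by positivity)]
    calc σ * C = (volume (Set.Ioc (m+k-σ) (m+k))).toReal • C := by
          rw [Real.volume_Ioc]
          rw [show m + k - (m+k-σ) = σ by ring, ENNReal.toReal_ofReal hσ.le, smul_eq_mul]
      _ = ∫ _ in Set.Ioc (m+k-σ) (m+k), C := (setIntegral_const C).symm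
      _ ≤ ∫ t in Set.Ioc (m+k-σ) (m+k), gaussianPDFReal m v t := by
          apply setIntegral_mono_on
          · exact (integrableOn_const_iff).mpr (Or.inr (by rw [Real.volume_Ioc]; exact ENNReal.ofReal_lt_top))
          · exact (integrable_gaussianPDFReal m v).integrableOn
          · exact measurableSet_Ioc
          · exact hpt
  have hIic : ENNReal.ofReal (1/16 : ℝ) ≤ gaussianReal m v (Set.Iic (m+k)) := by
    refine le_trans ?_ (le_trans hIoc (measure_mono Set.Ioc_subset_Iic_self))
    exact ENNReal.ofReal_le_ofReal hC16
  have hsum : gaussianReal m v (Set.Iic (m+k)) + gaussianReal m v (Set.Ioi (m+k)) = 1 := by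
    have := measure_add_measure_compl (μ := gaussianReal m v) (measurableSet_Iic (a := m+k))
    rwa [Set.compl_Iic, measure_univ] at this
  have hkey : ENNReal.ofReal (1/16:ℝ) + gaussianReal m v (Set.Ioi (m+k))
      ≤ ENNReal.ofReal (1/16:ℝ) + ENNReal.ofReal (15/16:ℝ) := by
    calc ENNReal.ofReal (1/16:ℝ) + gaussianReal m v (Set.Ioi (m+k))
        ≤ gaussianReal m v (Set.Iic (m+k)) + gaussianReal m v (Set.Ioi (m+k)) :=
          add_le_add_left hIic _
      _ = 1 := hsum
      _ = ENNReal.ofReal (1/16:ℝ) + ENNReal.ofReal (15/16:ℝ) := by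
          rw [← ENNReal.ofReal_add (by norm_num) (by norm_num)]
          norm_num
  exact (ENNReal.add_le_add_iff_left ENNReal.ofReal_ne_top).mp hkey




set_option maxHeartbeats 2000000 in
lemma gauss_main {σ ε δ k : ℝ} (hσ0 : 0 < σ) (hε0 : 0 < ε) (hε1 : ε < 1)
    (hδ0 : 0 < δ) (hδ1 : δ < 1)
    (hu : σ * (Real.sqrt (2 * Real.log (1.25/δ)) - ε/(2*Real.sqrt (2 * Real.log (1.25/δ)))) ≤ k)
    (a : ℝ) :
    gaussianReal a (σ^2).toNNReal (Set.Ioi (a + k)) ≤ ENNReal.ofReal δ := by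
  obtain ⟨L, hLdef⟩ : ∃ x : ℝ, x = Real.log (1.25/δ) := ⟨_, rfl⟩
  rw [← hLdef] at hu
  rw [show (1.25:ℝ) = 5/4 by norm_num] at hLdef
  have hinv : (5 : ℝ)/4 / δ = (δ / (5/4))⁻¹ := by rw [inv_div]
  have hL5 : 1/5 < L := by
    have h1 : Real.log (δ/(5/4)) ≤ δ/(5/4) - 1 := Real.log_le_sub_one_of_pos (by positivity)
    have h2 : L = - Real.log (δ/(5/4)) := by rw [hLdef, hinv, Real.log_inv]
    rw [h2]; linarith
  have hexpL : rexp (-L) = δ / (5/4) := by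
    rw [hLdef, hinv, Real.log_inv, neg_neg, Real.exp_log (by positivity)]
  obtain ⟨s, hsdef⟩ : ∃ x : ℝ, x = Real.sqrt (2*L) := ⟨_, rfl⟩
  rw [← hsdef] at hu
  have hs0 : 0 < s := hsdef ▸ Real.sqrt_pos.mpr (by linarith)
  have hs2 : s^2 = 2*L := hsdef ▸ Real.sq_sqrt (by linarith)
  have hshalf : 1/2 ≤ s := by nlinarith
  have hg_delta : s < ε/(2*s) → 15/16 < δ := by
    intro hg
    have h0 : s * (2*s) < (ε/(2*s)) * (2*s) := mul_lt_mul_of_pos_right hg (by positivity)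
    have h0' : (ε/(2*s)) * (2*s) = ε := by field_simp
    have hL14 : L < 1/4 := by nlinarith
    have h1 : (5:ℝ)/4/δ = rexp L := by rw [hLdef, Real.exp_log (by positivity)]
    have h2 : rexp L < rexp (1/4) := Real.exp_lt_exp.mpr (by linarith)
    have h3 : rexp (1/4) ≤ 4/3 := by
      have h4 : (3:ℝ)/4 ≤ rexp (-(1/4)) := by
        have := Real.add_one_le_exp (-(1/4) : ℝ); linarith
      have h5 : rexp (1/4) * rexp (-(1/4)) = 1 := by
        rw [← Real.exp_add]; norm_num
      nlinarith [Real.exp_pos (1/4 : ℝ)]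
    have h6 : (5:ℝ)/4/δ < 4/3 := by rw [h1]; linarith
    rw [div_lt_iff₀ hδ0] at h6
    linarith
  by_cases hk : 0 ≤ k
  · refine le_trans (gauss_tail hσ0 a k hk) (ENNReal.ofReal_le_ofReal ?_)
    by_cases hg : ε/(2*s) ≤ s
    · have hnn : 0 ≤ s - ε/(2*s) := by linarith
      have hk2 : σ^2 * (2*L - ε) ≤ k^2 := by
        have hq : (0:ℝ) ≤ ε^2/(4*s^2) := by positivity
        have h1 : (s - ε/(2*s))^2 ≥ 2*L - ε := by
          have hexpand : (s - ε/(2*s))^2 = s^2 - ε + ε^2/(4*s^2) := by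
            field_simp; ring
          rw [hexpand, hs2] at *
          linarith
        have h2 : (σ * (s - ε/(2*s)))^2 ≤ k^2 := by
          apply sq_le_sq' <;> nlinarith [mul_nonneg hσ0.le hnn]
        calc σ^2 * (2*L - ε) ≤ σ^2 * (s - ε/(2*s))^2 := by nlinarith [sq_nonneg σ]
          _ = (σ * (s - ε/(2*s)))^2 := by ring
          _ ≤ k^2 := h2
      have h3 : -k^2/(2*σ^2) ≤ ε/2 - L := by
        rw [neg_div, neg_le]
        rw [le_div_iff₀ (by positivity)]
        linarith
      have h4 : rexp (-k^2/(2*σ^2)) ≤ rexp (ε/2) * (δ/(5/4)) := by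
        rw [← hexpL, ← Real.exp_add]
        exact Real.exp_le_exp.mpr (by linarith)
      have h5 : rexp (ε/2) ≤ 5/2 := by
        have ha : rexp (ε/2) ≤ rexp (1/2) := Real.exp_le_exp.mpr (by linarith)
        have hb : rexp (1/2) * rexp (1/2) = rexp 1 := by rw [← Real.exp_add]; norm_num
        nlinarith [Real.exp_one_lt_d9, Real.exp_pos (1/2:ℝ), Real.exp_pos (ε/2)]
      have h6 : rexp (ε/2) * (δ/(5/4)) ≤ (5/2) * (δ/(5/4)) :=
        mul_le_mul_of_nonneg_right h5 (by positivity)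
      have h7 : (5/2:ℝ) * (δ/(5/4)) = 2*δ := by ring
      linarith
    · have hδ' : 15/16 < δ := hg_delta (not_le.mp hg)
      have h1 : rexp (-k^2/(2*σ^2)) ≤ 1 := by
        rw [Real.exp_le_one_iff, neg_div]
        simp only [neg_nonpos]
        positivity
      linarith
  · push_neg at hk
    have hg : s < ε/(2*s) := by
      by_contra hg
      push_neg at hg
      have : 0 ≤ σ * (s - ε/(2*s)) := mul_nonneg hσ0.le (by linarith)
      linarith
    have hδ' : 15/16 < δ := hg_delta hg
    have hk5 : -(σ/5) ≤ k := by
      have h2 : ε/(2*s) ≤ 1/(2*s) := by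
        gcongr
      have h25 : 1/(2*s) - s ≤ 1/5 := by
        have h26 : (1/(2*s) - s) * (2*s) = 1 - 2*s^2 := by field_simp
        nlinarith
      have h3 : σ * (-(1/5)) ≤ σ * (s - ε/(2*s)) :=
        mul_le_mul_of_nonneg_left (by linarith) hσ0.le
      calc -(σ/5) = σ * (-(1/5)) := by ring
        _ ≤ σ * (s - ε/(2*s)) := h3
        _ ≤ k := hu
    exact le_trans (gauss_low hσ0 a k hk.le hk5) (ENNReal.ofReal_le_ofReal (by linarith))





lemma gauss_split {v : NNReal} (hv : v ≠ 0) (a b ε δ : ℝ) (S : Set ℝ) (hS : MeasurableSet S)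
    (htail : gaussianReal a v S ≤ ENNReal.ofReal δ)
    (hpt : ∀ t, t ∉ S → gaussianPDF a v t ≤ ENNReal.ofReal (rexp ε) * gaussianPDF b v t)
    (E : Set ℝ) (hE : MeasurableSet E) :
    gaussianReal a v E ≤ ENNReal.ofReal (rexp ε) * gaussianReal b v E + ENNReal.ofReal δ := by
  have h1 : gaussianReal a v E ≤ gaussianReal a v (E ∩ Sᶜ) + gaussianReal a v (E ∩ S) := by
    conv_lhs => rw [← Set.inter_union_compl E S]
    rw [Set.union_comm]
    exact measure_union_le _ _
  have h2 : gaussianReal a v (E ∩ Sᶜ) ≤ ENNReal.ofReal (rexp ε) * gaussianReal b v E := by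
    calc gaussianReal a v (E ∩ Sᶜ) = ∫⁻ t in E ∩ Sᶜ, gaussianPDF a v t := gaussianReal_apply _ hv _
      _ ≤ ∫⁻ t in E ∩ Sᶜ, ENNReal.ofReal (rexp ε) * gaussianPDF b v t := by
          refine setLIntegral_mono ((measurable_gaussianPDF _ _).const_mul _) ?_
          exact fun t ht => hpt t ht.2
      _ = ENNReal.ofReal (rexp ε) * ∫⁻ t in E ∩ Sᶜ, gaussianPDF b v t := by
          rw [lintegral_const_mul _ (measurable_gaussianPDF _ _)]
      _ = ENNReal.ofReal (rexp ε) * gaussianReal b v (E ∩ Sᶜ) := by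
          rw [gaussianReal_apply _ hv]
      _ ≤ ENNReal.ofReal (rexp ε) * gaussianReal b v E :=
          mul_le_mul_right (measure_mono Set.inter_subset_left) _
  have h3 : gaussianReal a v (E ∩ S) ≤ ENNReal.ofReal δ :=
    le_trans (measure_mono Set.inter_subset_right) htail
  exact le_trans h1 (add_le_add h2 h3)

set_option maxHeartbeats 1000000 in
lemma gauss_key {σ Δ ε δ : ℝ} (hσ0 : 0 < σ) (hε0 : 0 < ε) (hε1 : ε < 1)
    (hδ0 : 0 < δ) (hδ1 : δ < 1) (hσ : σ ≥ Δ / ε * Real.sqrt (2 * Real.log (1.25 / δ)))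
    (a b : ℝ) (hab : |a - b| ≤ Δ) (E : Set ℝ) (hE : MeasurableSet E) :
    gaussianReal a (σ^2).toNNReal E ≤
      ENNReal.ofReal (rexp ε) * gaussianReal b (σ^2).toNNReal E + ENNReal.ofReal δ := by
  have hv0 : ((σ^2).toNNReal : NNReal) ≠ 0 := by
    simp [Real.toNNReal_eq_zero]; positivity
  have hvr : (((σ^2).toNNReal : NNReal) : ℝ) = σ^2 := Real.coe_toNNReal _ (sq_nonneg σ)
  by_cases hd : a = b
  · subst hd
    calc gaussianReal a (σ^2).toNNReal E
        = 1 * gaussianReal a (σ^2).toNNReal E := (one_mul _).symm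
      _ ≤ ENNReal.ofReal (rexp ε) * gaussianReal a (σ^2).toNNReal E := by
          refine mul_le_mul_left ?_ _
          rw [ENNReal.one_le_ofReal]
          exact Real.one_le_exp hε0.le
      _ ≤ _ := le_add_right le_rfl
  have hdne : a - b ≠ 0 := sub_ne_zero.mpr hd
  have hd0 : 0 < |a - b| := abs_pos.mpr hdne
  have hΔ0 : 0 < Δ := lt_of_lt_of_le hd0 hab
  obtain ⟨s, hsdef⟩ : ∃ x : ℝ, x = Real.sqrt (2 * Real.log (1.25/δ)) := ⟨_, rfl⟩
  rw [← hsdef] at hσ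
  have hL5 : 1/5 < Real.log (1.25/δ) := by
    have h1 : Real.log (δ/(5/4)) ≤ δ/(5/4) - 1 := Real.log_le_sub_one_of_pos (by positivity)
    have h2 : Real.log (1.25/δ) = - Real.log (δ/(5/4)) := by
      rw [show (1.25:ℝ) = 5/4 by norm_num, ← Real.log_inv, inv_div]
    rw [h2]; linarith
  have hs0 : 0 < s := hsdef ▸ Real.sqrt_pos.mpr (by linarith)
  obtain ⟨k, hkdef⟩ : ∃ x : ℝ, x = σ^2*ε/|a-b| - |a-b|/2 := ⟨_, rfl⟩
  -- hu : σ * (s - ε/(2s)) ≤ k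
  have hu : σ * (s - ε/(2*s)) ≤ k := by
    obtain ⟨r, hrdef⟩ : ∃ x : ℝ, x = σ * ε / Δ := ⟨_, rfl⟩
    have hr : s ≤ r := by
      rw [hrdef, le_div_iff₀ hΔ0]
      have h1 := mul_le_mul_of_nonneg_right hσ hε0.le
      calc s * Δ = Δ / ε * s * ε := by field_simp
        _ ≤ σ * ε := h1
    have hrpos : 0 < r := lt_of_lt_of_le hs0 hr
    have h1 : σ^2*ε/Δ ≤ σ^2*ε/|a-b| :=
      div_le_div_of_nonneg_left (by positivity) hd0 hab
    have h2 : σ^2*ε/Δ - Δ/2 = σ * (r - ε/(2*r)) := by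
      have hΔr : Δ = σ * ε / r := by rw [hrdef]; field_simp
      rw [hΔr]; field_simp
    have h3 : s - ε/(2*s) ≤ r - ε/(2*r) := by
      have h4 : ε/(2*r) ≤ ε/(2*s) :=
        div_le_div_of_nonneg_left hε0.le (by positivity) (by linarith)
      linarith
    have h4 : σ * (s - ε/(2*s)) ≤ σ * (r - ε/(2*r)) :=
      mul_le_mul_of_nonneg_left h3 hσ0.le
    rw [hkdef]; linarith
  have hmain : gaussianReal a (σ^2).toNNReal (Set.Ioi (a + k)) ≤ ENNReal.ofReal δ := by
    refine gauss_main hσ0 hε0 hε1 hδ0 hδ1 ?_ a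
    rw [← hsdef]; exact hu
  -- pointwise pdf bound
  have hpdf : ∀ t : ℝ, (a-b)*(2*t - a - b) ≤ 2*σ^2*ε →
      gaussianPDF a (σ^2).toNNReal t ≤
        ENNReal.ofReal (rexp ε) * gaussianPDF b (σ^2).toNNReal t := by
    intro t ht
    rw [gaussianPDF, gaussianPDF, ← ENNReal.ofReal_mul (exp_nonneg _)]
    apply ENNReal.ofReal_le_ofReal
    rw [gaussianPDFReal, gaussianPDFReal, mul_left_comm]
    refine mul_le_mul_of_nonneg_left ?_ (by positivity)
    rw [← Real.exp_add]
    apply Real.exp_le_exp.mpr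
    rw [hvr]
    have h2 : (0:ℝ) < 2*σ^2 := by positivity
    have h3 : ε + -(t-b)^2/(2*σ^2) = (ε*(2*σ^2) + -(t-b)^2)/(2*σ^2) := by
      field_simp
    rw [h3, div_le_div_iff₀ h2 h2]
    nlinarith
  rcases hdne.lt_or_gt with hlt | hlt
  · -- a < b : S = Iio (a - k)
    rw [sub_neg] at hlt
    have habs : |a - b| = b - a := by rw [abs_of_neg (show a - b < 0 by linarith)]; ring
    refine gauss_split hv0 a b ε δ (Set.Iio (a - k)) measurableSet_Iio ?_ ?_ E hE
    · rw [gauss_reflect a hv0 k]; exact hmain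
    · intro t htS
      simp only [Set.mem_Iio, not_lt] at htS
      apply hpdf
      have hdk : (b-a)*k = σ^2*ε - (b-a)^2/2 := by
        rw [hkdef, habs]
        have hba : b - a ≠ 0 := sub_ne_zero.mpr (ne_of_gt hlt)
        field_simp
      nlinarith [mul_le_mul_of_nonneg_left htS (le_of_lt (show (0:ℝ) < b - a by linarith))]
  · -- b < a : S = Ioi (a + k)
    rw [sub_pos] at hlt
    have habs : |a - b| = a - b := abs_of_pos (by linarith)
    refine gauss_split hv0 a b ε δ (Set.Ioi (a + k)) measurableSet_Ioi hmain ?_ E hE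
    intro t htS
    simp only [Set.mem_Ioi, not_lt] at htS
    apply hpdf
    have hdk : (a-b)*k = σ^2*ε - (a-b)^2/2 := by
      rw [hkdef, habs]
      have hba : a - b ≠ 0 := sub_ne_zero.mpr (ne_of_gt hlt)
      field_simp
    nlinarith [mul_le_mul_of_nonneg_left htS (le_of_lt (show (0:ℝ) < a - b by linarith))]

end GaussDPHelpers

/-- The one-dimensional Gaussian mechanism `M(x) = f(x) + N(0, σ²)` with sensitivity Δ and
`σ ≥ (Δ/ε)·√(2 ln(1.25/δ))` satisfies (ε,δ)-differential privacy: the output distribution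
of `M(x)` is the Gaussian measure centered at `f x` with variance σ². -/
theorem gaussian_mechanism_dp {X : Type*} (f : X → ℝ) (Δ ε δ σ : ℝ)
    (hΔ : ∀ x x', |f x - f x'| ≤ Δ)
    (hε0 : 0 < ε) (hε1 : ε < 1) (hδ0 : 0 < δ) (hδ1 : δ < 1)
    (hσ : σ ≥ Δ / ε * Real.sqrt (2 * Real.log (1.25 / δ))) :
    ∀ (x x' : X) (E : Set ℝ), MeasurableSet E →
      gaussianReal (f x) (σ ^ 2).toNNReal E ≤
        ENNReal.ofReal (Real.exp ε) * gaussianReal (f x') (σ ^ 2).toNNReal E +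
          ENNReal.ofReal δ := by
  intro x x' E hE
  have hΔ0 : 0 ≤ Δ := le_trans (abs_nonneg _) (hΔ x x)
  have hL5 : 1/5 < Real.log (1.25/δ) := by
    have h1 : Real.log (δ/(5/4)) ≤ δ/(5/4) - 1 := Real.log_le_sub_one_of_pos (by positivity)
    have h2 : Real.log (1.25/δ) = - Real.log (δ/(5/4)) := by
      rw [show (1.25:ℝ) = 5/4 by norm_num, ← Real.log_inv, inv_div]
    rw [h2]; linarith
  have hs0 : 0 < Real.sqrt (2 * Real.log (1.25/δ)) := Real.sqrt_pos.mpr (by linarith)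
  rcases lt_or_eq_of_le (le_trans (mul_nonneg (div_nonneg hΔ0 hε0.le) hs0.le) hσ) with hσ0 | hσ0
  · exact gauss_key hσ0 hε0 hε1 hδ0 hδ1 hσ (f x) (f x') (hΔ x x') E hE
  · -- σ = 0 : then Δ = 0 and f x = f x'
    have hΔ00 : Δ = 0 := by
      by_contra hne
      have hΔpos : 0 < Δ := lt_of_le_of_ne hΔ0 (Ne.symm hne)
      have : 0 < Δ / ε * Real.sqrt (2 * Real.log (1.25/δ)) :=
        mul_pos (div_pos hΔpos hε0) hs0
      nlinarith [hσ, hσ0]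
    have hfeq : f x = f x' := by
      have := hΔ x x'
      rw [hΔ00] at this
      have := abs_nonpos_iff.mp this
      linarith [sub_eq_zero.mp this]
    rw [hfeq]
    calc gaussianReal (f x') (σ^2).toNNReal E
        = 1 * gaussianReal (f x') (σ^2).toNNReal E := (one_mul _).symm
      _ ≤ ENNReal.ofReal (Real.exp ε) * gaussianReal (f x') (σ^2).toNNReal E := by
          refine mul_le_mul_left ?_ _
          rw [ENNReal.one_le_ofReal]
          exact Real.one_le_exp hε0.le
      _ ≤ _ := le_add_right le_rfl
end
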